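/- Hölder/convexity property of pressure: with the separated-set pressure $P_K$ over a fixed compact set $K$, for sub-additive potential sequences $\mathcal{G}, \mathcal{H}$ and $p \in [0,1]$, $P_K(p\mathcal{G} + (1-p)\mathcal{H}) \le p P_K(\mathcal{G}) + (1-p) P_K(\mathcal{H})$, where $p\mathcal{G} + (1-p)\mathcal{H} = (p \log g_n + (1-p)\log h_n)_n$. -/

import Mathlib

open Filter

/-- The Bowen metric `d_n(x,y) = max_{0 ≤ j ≤ n-1} d(fʲx, fʲy)` (for `n ≥ 1`). -/
noncomputable def bowenDist {X : Type*} [MetricSpace X] (f : X → X) (n : ℕ) (x y : X) : ℝ :=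
  ⨆ j : Fin n, dist (f^[j] x) (f^[j] y)

/-- `E` is an `(n,ε)`-separated set for `f`: distinct points of `E` have Bowen
`dₙ`-distance at least `ε`. -/
def IsSep {X : Type*} [MetricSpace X] (f : X → X) (n : ℕ) (ε : ℝ) (E : Finset X) : Prop :=
  ∀ y ∈ E, ∀ z ∈ E, y ≠ z → ε ≤ bowenDist f n y z

/-- The supremum of `∑_{y ∈ E} gₙ(y) = ∑_{y ∈ E} exp (G n y)` over all `(n,ε)`-separated
subsets `E` of `K`; here `G n = log gₙ`. -/
noncomputable def sepSum {X : Type*} [MetricSpace X] (f : X → X) (K : Set X)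
    (G : ℕ → X → ℝ) (n : ℕ) (ε : ℝ) : ℝ :=
  sSup { r : ℝ | ∃ E : Finset X, ↑E ⊆ K ∧ IsSep f n ε E ∧ r = ∑ y ∈ E, Real.exp (G n y) }

/-- The separated-set unstable pressure of the sub-additive potential sequence
`G = (log gₙ)` over the fixed compact set `K`:
`P_K(G) = lim_{ε→0} limsup_n (1/n) log sepSum`, where the limit as `ε → 0` is realized
as the supremum over `ε > 0` (the inner quantity being antitone in `ε`). -/
noncomputable def sepPressure {X : Type*} [MetricSpace X] (f : X → X) (K : Set X)
    (G : ℕ → X → ℝ) : EReal :=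
  ⨆ ε : {e : ℝ // 0 < e},
    limsup (fun n : ℕ => ((Real.log (sepSum f K G n ε) / n : ℝ) : EReal)) atTop

/-! ### Auxiliary lemmas -/

private lemma ereal_eq_bot_of_forall_le {L : EReal} (h : ∀ r : ℝ, L ≤ (r : EReal)) : L = ⊥ := by
  induction L using EReal.rec with
  | bot => rfl
  | coe t =>
    have := EReal.coe_le_coe_iff.1 (h (t - 1))
    linarith
  | top =>
    have := h 0
    simp at this

private lemma ereal_le_coe_of_forall_add {L : EReal} {c : ℝ}
    (h : ∀ δ : ℝ, 0 < δ → L ≤ ((c + δ : ℝ) : EReal)) : L ≤ (c : EReal) := by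
  induction L using EReal.rec with
  | bot => exact bot_le
  | coe t =>
    refine EReal.coe_le_coe_iff.2 ?_
    refine le_of_forall_pos_le_add fun δ hδ => ?_
    exact EReal.coe_le_coe_iff.1 (h δ hδ)
  | top =>
    exact absurd (h 1 one_pos) (EReal.coe_lt_top _).not_ge

/-- Cardinality bound for `(n,ε)`-separated sets in a compact space: there is `C` with
`card E ≤ C ^ n` for every `(n,ε)`-separated set `E` (with `n ≥ 1`). -/
private lemma sep_card_bound {X : Type*} [MetricSpace X] [CompactSpace X] (f : X → X)
    {ε : ℝ} (hε : 0 < ε) :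
    ∃ C : ℕ, 1 ≤ C ∧ ∀ n : ℕ, 1 ≤ n → ∀ E : Finset X, IsSep f n ε E → E.card ≤ C ^ n := by
  rcases isEmpty_or_nonempty X with hX | hX
  · refine ⟨1, le_rfl, fun n hn E _ => ?_⟩
    have : E = ∅ := Finset.eq_empty_of_isEmpty E
    simp [this]
  · obtain ⟨t, ht⟩ := isCompact_univ.elim_finite_subcover
      (fun x : X => Metric.ball x (ε / 2)) (fun x => Metric.isOpen_ball)
      (fun x _ => Set.mem_iUnion.2 ⟨x, Metric.mem_ball_self (by linarith)⟩)
    have hcov : ∀ x : X, ∃ c ∈ t, x ∈ Metric.ball c (ε / 2) := by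
      intro x
      have := ht (Set.mem_univ x)
      simpa using this
    choose c hc hc' using hcov
    have htne : t.Nonempty := ⟨c (Classical.arbitrary X), hc _⟩
    refine ⟨t.card, htne.card_pos, fun n hn E hE => ?_⟩
    have hn' : Nonempty (Fin n) := ⟨⟨0, hn⟩⟩
    have hinj : Set.InjOn
        (fun y : X => fun j : Fin n => (⟨c (f^[(j : ℕ)] y), hc _⟩ : {x // x ∈ t}))
        (E : Set X) := by
      intro y hy z hz hyz
      by_contra hne
      have hsep := hE y hy z hz hne
      have hlt : ∀ j : Fin n, dist (f^[(j : ℕ)] y) (f^[(j : ℕ)] z) < ε := by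
        intro j
        have hcc : c (f^[(j : ℕ)] y) = c (f^[(j : ℕ)] z) := by
          have := congrFun hyz j
          exact Subtype.mk_eq_mk.1 this
        have h1 : dist (f^[(j : ℕ)] y) (c (f^[(j : ℕ)] y)) < ε / 2 :=
          Metric.mem_ball.1 (hc' (f^[(j : ℕ)] y))
        have h2 : dist (f^[(j : ℕ)] z) (c (f^[(j : ℕ)] y)) < ε / 2 := by
          rw [hcc]; exact Metric.mem_ball.1 (hc' (f^[(j : ℕ)] z))
        calc dist (f^[(j : ℕ)] y) (f^[(j : ℕ)] z)
            ≤ dist (f^[(j : ℕ)] y) (c (f^[(j : ℕ)] y))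
              + dist (f^[(j : ℕ)] z) (c (f^[(j : ℕ)] y)) := dist_triangle_right _ _ _
          _ < ε / 2 + ε / 2 := add_lt_add h1 h2
          _ = ε := by ring
      obtain ⟨j, hj⟩ := exists_eq_ciSup_of_finite
        (f := fun j : Fin n => dist (f^[(j : ℕ)] y) (f^[(j : ℕ)] z))
      have hblt : bowenDist f n y z < ε := by
        rw [bowenDist, ← hj]; exact hlt j
      exact absurd hsep (not_le.2 hblt)
    have hcard := Finset.card_le_card_of_injOn
      (fun y : X => fun j : Fin n => (⟨c (f^[(j : ℕ)] y), hc _⟩ : {x // x ∈ t}))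
      (fun a _ => Finset.mem_univ _) hinj
    calc E.card ≤ (Finset.univ : Finset (Fin n → {x // x ∈ t})).card := hcard
      _ = t.card ^ n := by
        rw [Finset.card_univ, Fintype.card_fun, Fintype.card_coe, Fintype.card_fin]

/-- A sub-additive continuous potential sequence is linearly bounded above. -/
private lemma pot_linear {X : Type*} [MetricSpace X] [CompactSpace X] [Nonempty X]
    (f : X → X) (P : ℕ → X → ℝ) (hc : Continuous (P 1))
    (hsub : ∀ x : X, ∀ m n : ℕ, 1 ≤ m → 1 ≤ n → P (m + n) x ≤ P n x + P m (f^[n] x)) :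
    ∃ M : ℝ, ∀ n : ℕ, 1 ≤ n → ∀ x : X, P n x ≤ n * M := by
  obtain ⟨z, -, hz⟩ := isCompact_univ.exists_isMaxOn Set.univ_nonempty hc.continuousOn
  refine ⟨P 1 z, fun n hn => ?_⟩
  induction n, hn using Nat.le_induction with
  | base => intro x; simpa using hz (Set.mem_univ x)
  | succ n hn ih =>
    intro x
    have h1 := hsub x 1 n le_rfl hn
    calc P (n + 1) x = P (1 + n) x := by rw [Nat.add_comm]
      _ ≤ P n x + P 1 (f^[n] x) := h1
      _ ≤ (n : ℝ) * P 1 z + P 1 z := add_le_add (ih x) (hz (Set.mem_univ _))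
      _ = ((n + 1 : ℕ) : ℝ) * P 1 z := by push_cast; ring

/-- Hölder's inequality for finite sums of exponentials. -/
private lemma holder_sum {X : Type*} (E : Finset X) {pp q : ℝ} (hp : 0 ≤ pp) (hq : 0 ≤ q)
    (hpq : pp + q = 1) (a b : X → ℝ) {Sa Sb : ℝ} (hSa : 0 < Sa) (hSb : 0 < Sb)
    (hA : ∑ y ∈ E, Real.exp (a y) ≤ Sa) (hB : ∑ y ∈ E, Real.exp (b y) ≤ Sb) :
    ∑ y ∈ E, Real.exp (pp * a y + q * b y) ≤ Sa ^ pp * Sb ^ q := by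
  have hSap : 0 < Sa ^ pp := Real.rpow_pos_of_pos hSa _
  have hSbq : 0 < Sb ^ q := Real.rpow_pos_of_pos hSb _
  have key : ∀ y : X, Real.exp (pp * a y + q * b y)
      = (Sa ^ pp * Sb ^ q) * ((Real.exp (a y) / Sa) ^ pp * (Real.exp (b y) / Sb) ^ q) := by
    intro y
    rw [Real.exp_add, mul_comm pp (a y), mul_comm q (b y), Real.exp_mul, Real.exp_mul,
      Real.div_rpow (Real.exp_nonneg _) hSa.le, Real.div_rpow (Real.exp_nonneg _) hSb.le]
    field_simp
  calc ∑ y ∈ E, Real.exp (pp * a y + q * b y)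
      = (Sa ^ pp * Sb ^ q)
          * ∑ y ∈ E, ((Real.exp (a y) / Sa) ^ pp * (Real.exp (b y) / Sb) ^ q) := by
        rw [Finset.mul_sum]; exact Finset.sum_congr rfl fun y _ => key y
    _ ≤ (Sa ^ pp * Sb ^ q) * 1 := by
        refine mul_le_mul_of_nonneg_left ?_ (by positivity)
        calc ∑ y ∈ E, ((Real.exp (a y) / Sa) ^ pp * (Real.exp (b y) / Sb) ^ q)
            ≤ ∑ y ∈ E, (pp * (Real.exp (a y) / Sa) + q * (Real.exp (b y) / Sb)) :=
              Finset.sum_le_sum fun y _ =>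
                Real.geom_mean_le_arith_mean2_weighted hp hq (by positivity) (by positivity) hpq
          _ = pp * ((∑ y ∈ E, Real.exp (a y)) / Sa)
              + q * ((∑ y ∈ E, Real.exp (b y)) / Sb) := by
              rw [Finset.sum_add_distrib, ← Finset.mul_sum, ← Finset.mul_sum,
                ← Finset.sum_div, ← Finset.sum_div]
          _ ≤ pp * 1 + q * 1 := by
              gcongr
              · exact (div_le_one hSa).2 hA
              · exact (div_le_one hSb).2 hB
          _ = 1 := by rw [mul_one, mul_one, hpq]
    _ = Sa ^ pp * Sb ^ q := mul_one _

/-- Basic bounds on `sepSum`: upper bound for every element of the defining set, a positive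
lower bound, and an exponential upper bound. -/
private lemma sepSum_props {X : Type*} [MetricSpace X] (f : X → X) (K : Set X) {y₀ : X}
    (hy₀ : y₀ ∈ K) (P : ℕ → X → ℝ) {ε : ℝ} {n : ℕ} {C : ℕ} {M : ℝ}
    (hcard : ∀ E : Finset X, IsSep f n ε E → E.card ≤ C ^ n)
    (hM : ∀ x : X, P n x ≤ (n : ℝ) * M) :
    (∀ r ∈ {r : ℝ | ∃ E : Finset X, ↑E ⊆ K ∧ IsSep f n ε E ∧ r = ∑ y ∈ E, Real.exp (P n y)},
        r ≤ (C : ℝ) ^ n * Real.exp ((n : ℝ) * M)) ∧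
      Real.exp (P n y₀) ≤ sepSum f K P n ε ∧
      sepSum f K P n ε ≤ (C : ℝ) ^ n * Real.exp ((n : ℝ) * M) := by
  have hub : ∀ r ∈ {r : ℝ | ∃ E : Finset X, ↑E ⊆ K ∧ IsSep f n ε E ∧
      r = ∑ y ∈ E, Real.exp (P n y)}, r ≤ (C : ℝ) ^ n * Real.exp ((n : ℝ) * M) := by
    rintro r ⟨E, hEK, hEs, rfl⟩
    calc ∑ y ∈ E, Real.exp (P n y) ≤ ∑ _y ∈ E, Real.exp ((n : ℝ) * M) :=
          Finset.sum_le_sum fun y _ => Real.exp_le_exp.2 (hM y)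
      _ = (E.card : ℝ) * Real.exp ((n : ℝ) * M) := by rw [Finset.sum_const, nsmul_eq_mul]
      _ ≤ (C : ℝ) ^ n * Real.exp ((n : ℝ) * M) := by
          have : (E.card : ℝ) ≤ (C : ℝ) ^ n := by exact_mod_cast hcard E hEs
          exact mul_le_mul_of_nonneg_right this (Real.exp_nonneg _)
  have hbdd : BddAbove {r : ℝ | ∃ E : Finset X, ↑E ⊆ K ∧ IsSep f n ε E ∧
      r = ∑ y ∈ E, Real.exp (P n y)} := ⟨_, hub⟩
  have hmem : Real.exp (P n y₀) ∈ {r : ℝ | ∃ E : Finset X, ↑E ⊆ K ∧ IsSep f n ε E ∧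
      r = ∑ y ∈ E, Real.exp (P n y)} := by
    refine ⟨{y₀}, by simpa using hy₀, ?_, by simp⟩
    intro y hy z hz hne
    rw [Finset.mem_singleton] at hy hz
    subst hy; subst hz
    exact absurd rfl hne
  exact ⟨hub, le_csSup hbdd hmem, Real.sSup_le hub (by positivity)⟩

/-- The main limsup estimate, in `EReal`. -/
private lemma limsup_convex_bound {x a b : ℕ → ℝ} {p q KG KH : ℝ}
    (hp : 0 < p) (hq : 0 < q) (hpq : p + q = 1)
    (hx : ∀ᶠ n in atTop, x n ≤ p * a n + q * b n)
    (ha : ∀ᶠ n in atTop, a n ≤ KG) (hb : ∀ᶠ n in atTop, b n ≤ KH) :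
    limsup (fun n => ((x n : ℝ) : EReal)) atTop ≤
      (p : EReal) * limsup (fun n => ((a n : ℝ) : EReal)) atTop
        + (q : EReal) * limsup (fun n => ((b n : ℝ) : EReal)) atTop := by
  have hAtop : limsup (fun n => ((a n : ℝ) : EReal)) atTop ≤ ((KG : ℝ) : EReal) :=
    limsup_le_of_le (h := by
      filter_upwards [ha] with n h
      exact EReal.coe_le_coe_iff.2 h)
  have hBtop : limsup (fun n => ((b n : ℝ) : EReal)) atTop ≤ ((KH : ℝ) : EReal) :=
    limsup_le_of_le (h := by
      filter_upwards [hb] with n h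
      exact EReal.coe_le_coe_iff.2 h)
  rcases eq_or_ne (limsup (fun n => ((a n : ℝ) : EReal)) atTop) ⊥ with hA | hA
  · rw [hA, EReal.mul_bot_of_pos (by exact_mod_cast hp), EReal.bot_add]
    refine le_of_eq (ereal_eq_bot_of_forall_le fun r => ?_)
    have h1 : limsup (fun n => ((a n : ℝ) : EReal)) atTop < (((r - q * KH) / p : ℝ) : EReal) := by
      rw [hA]; exact EReal.bot_lt_coe _
    have h2 := eventually_lt_of_limsup_lt h1
    refine limsup_le_of_le (h := ?_)
    filter_upwards [h2, hx, hb] with n h2 hx hb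
    refine EReal.coe_le_coe_iff.2 ?_
    have han : a n < (r - q * KH) / p := EReal.coe_lt_coe_iff.1 h2
    have : p * a n + q * b n ≤ p * ((r - q * KH) / p) + q * KH :=
      add_le_add (mul_le_mul_of_nonneg_left han.le hp.le) (mul_le_mul_of_nonneg_left hb hq.le)
    have heq : p * ((r - q * KH) / p) + q * KH = r := by field_simp; ring
    linarith
  rcases eq_or_ne (limsup (fun n => ((b n : ℝ) : EReal)) atTop) ⊥ with hB | hB
  · rw [hB, EReal.mul_bot_of_pos (by exact_mod_cast hq), EReal.add_bot]
    refine le_of_eq (ereal_eq_bot_of_forall_le fun r => ?_)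
    have h1 : limsup (fun n => ((b n : ℝ) : EReal)) atTop < (((r - p * KG) / q : ℝ) : EReal) := by
      rw [hB]; exact EReal.bot_lt_coe _
    have h2 := eventually_lt_of_limsup_lt h1
    refine limsup_le_of_le (h := ?_)
    filter_upwards [h2, hx, ha] with n h2 hx ha
    refine EReal.coe_le_coe_iff.2 ?_
    have hbn : b n < (r - p * KG) / q := EReal.coe_lt_coe_iff.1 h2
    have : p * a n + q * b n ≤ p * KG + q * ((r - p * KG) / q) :=
      add_le_add (mul_le_mul_of_nonneg_left ha hp.le) (mul_le_mul_of_nonneg_left hbn.le hq.le)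
    have heq : p * KG + q * ((r - p * KG) / q) = r := by field_simp; ring
    linarith
  · have hAne : limsup (fun n => ((a n : ℝ) : EReal)) atTop ≠ ⊤ :=
      fun h => absurd (h ▸ hAtop) (by simp)
    have hBne : limsup (fun n => ((b n : ℝ) : EReal)) atTop ≠ ⊤ :=
      fun h => absurd (h ▸ hBtop) (by simp)
    obtain ⟨A', hA'⟩ : ∃ r : ℝ, limsup (fun n => ((a n : ℝ) : EReal)) atTop = (r : EReal) :=
      ⟨_, (EReal.coe_toReal hAne hA).symm⟩
    obtain ⟨B', hB'⟩ : ∃ r : ℝ, limsup (fun n => ((b n : ℝ) : EReal)) atTop = (r : EReal) :=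
      ⟨_, (EReal.coe_toReal hBne hB).symm⟩
    rw [hA', hB', ← EReal.coe_mul, ← EReal.coe_mul, ← EReal.coe_add]
    refine ereal_le_coe_of_forall_add fun δ hδ => ?_
    have ha2 : ∀ᶠ n in atTop, a n < A' + δ := by
      have h1 : limsup (fun n => ((a n : ℝ) : EReal)) atTop < ((A' + δ : ℝ) : EReal) := by
        rw [hA']; exact EReal.coe_lt_coe_iff.2 (by linarith)
      filter_upwards [eventually_lt_of_limsup_lt h1] with n h
      exact EReal.coe_lt_coe_iff.1 h
    have hb2 : ∀ᶠ n in atTop, b n < B' + δ := by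
      have h1 : limsup (fun n => ((b n : ℝ) : EReal)) atTop < ((B' + δ : ℝ) : EReal) := by
        rw [hB']; exact EReal.coe_lt_coe_iff.2 (by linarith)
      filter_upwards [eventually_lt_of_limsup_lt h1] with n h
      exact EReal.coe_lt_coe_iff.1 h
    refine limsup_le_of_le (h := ?_)
    filter_upwards [hx, ha2, hb2] with n hx ha2 hb2
    refine EReal.coe_le_coe_iff.2 ?_
    have h1 : p * a n + q * b n ≤ p * (A' + δ) + q * (B' + δ) :=
      add_le_add (mul_le_mul_of_nonneg_left ha2.le hp.le)
        (mul_le_mul_of_nonneg_left hb2.le hq.le)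
    have h2 : p * (A' + δ) + q * (B' + δ) = p * A' + q * B' + δ := by
      linear_combination δ * hpq
    linarith

/-- Convexity of the separated-set pressure over a fixed compact set: for sub-additive
potential sequences `G, H` and `p ∈ [0,1]`,
`P_K(p G + (1-p) H) ≤ p P_K(G) + (1-p) P_K(H)`. -/
theorem sepPressure_convex {X : Type*} [MetricSpace X] [CompactSpace X]
    (f : X → X) (hf : Continuous f) (K : Set X) (hK : IsCompact K)
    (G H : ℕ → X → ℝ) (hGcont : ∀ n, Continuous (G n)) (hHcont : ∀ n, Continuous (H n))
    (hsubG : ∀ x : X, ∀ m n : ℕ, 1 ≤ m → 1 ≤ n → G (m + n) x ≤ G n x + G m (f^[n] x))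
    (hsubH : ∀ x : X, ∀ m n : ℕ, 1 ≤ m → 1 ≤ n → H (m + n) x ≤ H n x + H m (f^[n] x))
    (p : ℝ) (hp0 : 0 ≤ p) (hp1 : p ≤ 1) :
    sepPressure f K (fun n x => p * G n x + (1 - p) * H n x) ≤
      (p : EReal) * sepPressure f K G + ((1 - p : ℝ) : EReal) * sepPressure f K H := by
  rcases eq_or_lt_of_le hp0 with hp0' | hp0'
  · -- p = 0
    have hfun : (fun n x => p * G n x + (1 - p) * H n x) = H := by
      funext n x; rw [← hp0']; ring
    rw [hfun, ← hp0']
    norm_num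
  rcases eq_or_lt_of_le hp1 with hp1' | hp1'
  · -- p = 1
    subst hp1'
    have hfun : (fun n x => (1 : ℝ) * G n x + (1 - 1) * H n x) = G := by
      funext n x; ring
    rw [hfun]
    norm_num
  -- 0 < p < 1
  have hq0 : 0 < 1 - p := by linarith
  rcases Set.eq_empty_or_nonempty K with hKe | ⟨y₀, hy₀⟩
  · -- K is empty : everything vanishes
    have hz : ∀ P : ℕ → X → ℝ, sepPressure f K P = 0 := by
      intro P
      have hss : ∀ (n : ℕ) (e : ℝ), sepSum f K P n e = 0 := by
        intro n e
        have hset : {r : ℝ | ∃ E : Finset X, ↑E ⊆ K ∧ IsSep f n e E ∧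
            r = ∑ y ∈ E, Real.exp (P n y)} = {0} := by
          ext r
          constructor
          · rintro ⟨E, hEK, -, rfl⟩
            have hE : E = ∅ := by
              rw [← Finset.coe_eq_empty, ← Set.subset_empty_iff, ← hKe]
              exact hEK
            simp [hE]
          · rintro rfl
            exact ⟨∅, by simp, fun y hy => absurd hy (Finset.notMem_empty y), by simp⟩
        simp only [sepSum, hset, csSup_singleton]
      simp only [sepPressure, hss, Real.log_zero, zero_div, EReal.coe_zero, limsup_const,
        iSup_const]
    rw [hz, hz, hz]
    simp
  -- K is nonempty
  haveI : Nonempty X := ⟨y₀⟩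
  obtain ⟨MG, hMG⟩ := pot_linear f G (hGcont 1) hsubG
  obtain ⟨MH, hMH⟩ := pot_linear f H (hHcont 1) hsubH
  simp only [sepPressure]
  refine iSup_le fun e => ?_
  obtain ⟨ε, hε⟩ := e
  obtain ⟨C, hC1, hCard⟩ := sep_card_bound f hε
  have hC0 : (0 : ℝ) < (C : ℝ) := by exact_mod_cast hC1
  -- the combined potential is linearly bounded too
  have hMc : ∀ n : ℕ, 1 ≤ n → ∀ x : X,
      p * G n x + (1 - p) * H n x ≤ (n : ℝ) * (p * MG + (1 - p) * MH) := by
    intro n hn x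
    have h1 : p * G n x ≤ p * ((n : ℝ) * MG) :=
      mul_le_mul_of_nonneg_left (hMG n hn x) hp0
    have h2 : (1 - p) * H n x ≤ (1 - p) * ((n : ℝ) * MH) :=
      mul_le_mul_of_nonneg_left (hMH n hn x) hq0.le
    calc p * G n x + (1 - p) * H n x ≤ p * ((n : ℝ) * MG) + (1 - p) * ((n : ℝ) * MH) :=
          add_le_add h1 h2
      _ = (n : ℝ) * (p * MG + (1 - p) * MH) := by ring
  -- the key pointwise inequality between the log-sums, for n ≥ 1
  have hxn : ∀ n : ℕ, 1 ≤ n →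
      Real.log (sepSum f K (fun n x => p * G n x + (1 - p) * H n x) n ε) / n ≤
        p * (Real.log (sepSum f K G n ε) / n)
          + (1 - p) * (Real.log (sepSum f K H n ε) / n) := by
    intro n hn
    obtain ⟨hubG, hlowG, -⟩ :=
      sepSum_props f K hy₀ G (hCard n hn) (fun x => hMG n hn x) (ε := ε)
    obtain ⟨hubH, hlowH, -⟩ :=
      sepSum_props f K hy₀ H (hCard n hn) (fun x => hMH n hn x) (ε := ε)
    obtain ⟨-, hlowc, -⟩ :=
      sepSum_props f K hy₀ (fun n x => p * G n x + (1 - p) * H n x)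
        (hCard n hn) (fun x => hMc n hn x) (ε := ε)
    have hSG0 : 0 < sepSum f K G n ε := lt_of_lt_of_le (Real.exp_pos _) hlowG
    have hSH0 : 0 < sepSum f K H n ε := lt_of_lt_of_le (Real.exp_pos _) hlowH
    have hSc0 : 0 < sepSum f K (fun n x => p * G n x + (1 - p) * H n x) n ε :=
      lt_of_lt_of_le (Real.exp_pos _) hlowc
    have hHolder : sepSum f K (fun n x => p * G n x + (1 - p) * H n x) n ε ≤
        sepSum f K G n ε ^ p * sepSum f K H n ε ^ (1 - p) := by
      refine Real.sSup_le ?_ (by positivity)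
      rintro r ⟨E, hEK, hEs, rfl⟩
      refine holder_sum E hp0 hq0.le (by ring) (G n) (H n) hSG0 hSH0 ?_ ?_
      · exact le_csSup ⟨_, hubG⟩ ⟨E, hEK, hEs, rfl⟩
      · exact le_csSup ⟨_, hubH⟩ ⟨E, hEK, hEs, rfl⟩
    have hlog : Real.log (sepSum f K (fun n x => p * G n x + (1 - p) * H n x) n ε) ≤
        p * Real.log (sepSum f K G n ε) + (1 - p) * Real.log (sepSum f K H n ε) := by
      calc Real.log (sepSum f K (fun n x => p * G n x + (1 - p) * H n x) n ε)
          ≤ Real.log (sepSum f K G n ε ^ p * sepSum f K H n ε ^ (1 - p)) :=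
            Real.log_le_log hSc0 hHolder
        _ = p * Real.log (sepSum f K G n ε) + (1 - p) * Real.log (sepSum f K H n ε) := by
            rw [Real.log_mul (Real.rpow_pos_of_pos hSG0 _).ne' (Real.rpow_pos_of_pos hSH0 _).ne',
              Real.log_rpow hSG0, Real.log_rpow hSH0]
    have hn0 : (0 : ℝ) < (n : ℝ) := by exact_mod_cast hn
    calc Real.log (sepSum f K (fun n x => p * G n x + (1 - p) * H n x) n ε) / n
        ≤ (p * Real.log (sepSum f K G n ε) + (1 - p) * Real.log (sepSum f K H n ε)) / n :=
          (div_le_div_iff_of_pos_right hn0).2 hlog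
      _ = p * (Real.log (sepSum f K G n ε) / n)
          + (1 - p) * (Real.log (sepSum f K H n ε) / n) := by ring
  -- eventual upper bounds on the normalized log-sums
  have haB : ∀ᶠ n in atTop, Real.log (sepSum f K G n ε) / n ≤ Real.log C + MG := by
    filter_upwards [eventually_ge_atTop 1] with n hn
    obtain ⟨-, hlowG, hupG⟩ :=
      sepSum_props f K hy₀ G (hCard n hn) (fun x => hMG n hn x) (ε := ε)
    have hSG0 : 0 < sepSum f K G n ε := lt_of_lt_of_le (Real.exp_pos _) hlowG
    have hn0 : (0 : ℝ) < (n : ℝ) := by exact_mod_cast hn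
    have hlog : Real.log (sepSum f K G n ε) ≤ (n : ℝ) * (Real.log C + MG) := by
      calc Real.log (sepSum f K G n ε)
          ≤ Real.log ((C : ℝ) ^ n * Real.exp ((n : ℝ) * MG)) := Real.log_le_log hSG0 hupG
        _ = (n : ℝ) * Real.log C + (n : ℝ) * MG := by
            rw [Real.log_mul (by positivity) (Real.exp_pos _).ne', Real.log_pow,
              Real.log_exp]
        _ = (n : ℝ) * (Real.log C + MG) := by ring
    rw [div_le_iff₀ hn0, mul_comm]
    exact hlog
  have hbB : ∀ᶠ n in atTop, Real.log (sepSum f K H n ε) / n ≤ Real.log C + MH := by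
    filter_upwards [eventually_ge_atTop 1] with n hn
    obtain ⟨-, hlowH, hupH⟩ :=
      sepSum_props f K hy₀ H (hCard n hn) (fun x => hMH n hn x) (ε := ε)
    have hSH0 : 0 < sepSum f K H n ε := lt_of_lt_of_le (Real.exp_pos _) hlowH
    have hn0 : (0 : ℝ) < (n : ℝ) := by exact_mod_cast hn
    have hlog : Real.log (sepSum f K H n ε) ≤ (n : ℝ) * (Real.log C + MH) := by
      calc Real.log (sepSum f K H n ε)
          ≤ Real.log ((C : ℝ) ^ n * Real.exp ((n : ℝ) * MH)) := Real.log_le_log hSH0 hupH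
        _ = (n : ℝ) * Real.log C + (n : ℝ) * MH := by
            rw [Real.log_mul (by positivity) (Real.exp_pos _).ne', Real.log_pow,
              Real.log_exp]
        _ = (n : ℝ) * (Real.log C + MH) := by ring
    rw [div_le_iff₀ hn0, mul_comm]
    exact hlog
  -- apply the limsup estimate
  have hmain := limsup_convex_bound (p := p) (q := 1 - p)
    (x := fun n => Real.log (sepSum f K (fun n x => p * G n x + (1 - p) * H n x) n ε) / n)
    (a := fun n => Real.log (sepSum f K G n ε) / n)
    (b := fun n => Real.log (sepSum f K H n ε) / n)
    hp0' hq0 (by ring)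
    (by filter_upwards [eventually_ge_atTop 1] with n hn; exact hxn n hn) haB hbB
  refine le_trans hmain (add_le_add ?_ ?_)
  · refine mul_le_mul_of_nonneg_left ?_ (by exact_mod_cast hp0)
    exact le_iSup (fun e : {e : ℝ // 0 < e} =>
      limsup (fun n : ℕ => ((Real.log (sepSum f K G n e) / n : ℝ) : EReal)) atTop) ⟨ε, hε⟩
  · refine mul_le_mul_of_nonneg_left ?_ (by exact_mod_cast hq0.le)
    exact le_iSup (fun e : {e : ℝ // 0 < e} =>
      limsup (fun n : ℕ => ((Real.log (sepSum f K H n e) / n : ℝ) : EReal)) atTop) ⟨ε, hε⟩
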